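/- (Bias of the clipped importance-sampling estimator.) Suppose η > 0 and ε > 0 satisfy P({ω : r(ω) > η}) ≤ ε/2. Then ∫ Y·r·1{r ≤ η} dQ ≤ ∫ Y dP ≤ ∫ Y·r·1{r ≤ η} dQ + ε/2. -/
import Mathlib


open MeasureTheory

/-- Bias of the clipped importance-sampling estimator: if `P(r > η) ≤ ε/2` then
`∫ Y·r·1{r ≤ η} dQ ≤ ∫ Y dP ≤ ∫ Y·r·1{r ≤ η} dQ + ε/2`. -/
theorem stmt1 {Ω : Type*} [MeasurableSpace Ω]
    (P Q : Measure Ω) [IsProbabilityMeasure P] [IsProbabilityMeasure Q]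
    (r : Ω → ℝ) (hr_meas : Measurable r) (hr_nonneg : ∀ ω, 0 ≤ r ω)
    (hPQ : ∀ A : Set Ω, MeasurableSet A → (P A).toReal = ∫ ω in A, r ω ∂Q)
    (Y : Ω → ℝ) (hY_meas : Measurable Y)
    (hY0 : ∀ ω, 0 ≤ Y ω) (hY1 : ∀ ω, Y ω ≤ 1)
    (η ε : ℝ) (hη : 0 < η) (hε : 0 < ε)
    (htail : (P {ω | η < r ω}).toReal ≤ ε / 2) :
    ∫ ω, (if r ω ≤ η then Y ω * r ω else 0) ∂Q ≤ ∫ ω, Y ω ∂P ∧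
    ∫ ω, Y ω ∂P ≤ (∫ ω, (if r ω ≤ η then Y ω * r ω else 0) ∂Q) + ε / 2 := by
  -- total mass
  have h1 : ∫ ω, r ω ∂Q = 1 := by
    have := hPQ Set.univ MeasurableSet.univ
    simpa [measure_univ] using this.symm
  have hint_r : Integrable r Q := by
    by_contra h
    rw [integral_undef h] at h1
    norm_num at h1
  -- P is withDensity
  have hdens : P = Q.withDensity (fun ω => ENNReal.ofReal (r ω)) := by
    ext A hA
    rw [withDensity_apply _ hA]
    have hir : IntegrableOn r A Q := hint_r.integrableOn
    have h2 : ∫⁻ ω in A, ENNReal.ofReal (r ω) ∂Q = ENNReal.ofReal (∫ ω in A, r ω ∂Q) :=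
      (ofReal_integral_eq_lintegral_ofReal hir
        (Filter.Eventually.of_forall fun ω => hr_nonneg ω)).symm
    rw [h2, ← hPQ A hA, ENNReal.ofReal_toReal (measure_ne_top P A)]
  -- change of variables
  have hYP : ∫ ω, Y ω ∂P = ∫ ω, Y ω * r ω ∂Q := by
    rw [hdens]
    have hf : Measurable (fun ω => Real.toNNReal (r ω)) := hr_meas.real_toNNReal
    have hco : (fun ω => ENNReal.ofReal (r ω)) = fun ω => ((Real.toNNReal (r ω) : NNReal) : ENNReal) := rfl
    rw [hco, integral_withDensity_eq_integral_smul hf]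
    congr 1
    ext ω
    simp [NNReal.smul_def, Real.coe_toNNReal _ (hr_nonneg ω), mul_comm]
  have hmeasYr : Measurable (fun ω => Y ω * r ω) := hY_meas.mul hr_meas
  have hint_Yr : Integrable (fun ω => Y ω * r ω) Q := by
    refine hint_r.mono hmeasYr.aestronglyMeasurable (Filter.Eventually.of_forall fun ω => ?_)
    rw [Real.norm_eq_abs, Real.norm_eq_abs, abs_mul, abs_of_nonneg (hr_nonneg ω),
      abs_of_nonneg (hY0 ω)]
    nlinarith [hY1 ω, hr_nonneg ω]
  set g := fun ω => if r ω ≤ η then Y ω * r ω else 0 with hg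
  have hmeasg : Measurable g := Measurable.ite (measurableSet_le hr_meas measurable_const)
    hmeasYr measurable_const
  have hint_g : Integrable g Q := by
    refine hint_Yr.mono hmeasg.aestronglyMeasurable (Filter.Eventually.of_forall fun ω => ?_)
    simp only [hg]
    split_ifs with h
    · exact le_rfl
    · simp only [norm_zero]; positivity
  set s : Set Ω := {ω | η < r ω} with hs
  have hsm : MeasurableSet s := measurableSet_lt measurable_const hr_meas
  have hint_ind : Integrable (s.indicator r) Q := hint_r.indicator hsm
  have htail' : ∫ ω, s.indicator r ω ∂Q ≤ ε / 2 := by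
    rw [integral_indicator hsm, ← hPQ s hsm]
    exact htail
  constructor
  · rw [hYP]
    refine integral_mono hint_g hint_Yr fun ω => ?_
    simp only [hg]
    split_ifs with h
    · exact le_rfl
    · exact mul_nonneg (hY0 ω) (hr_nonneg ω)
  · rw [hYP]
    have key : ∫ ω, Y ω * r ω ∂Q ≤ ∫ ω, (g ω + s.indicator r ω) ∂Q := by
      refine integral_mono hint_Yr (hint_g.add hint_ind) fun ω => ?_
      simp only [hg, Set.indicator, hs, Set.mem_setOf_eq]
      by_cases h : r ω ≤ η
      · simp [h, not_lt.mpr h]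
      · have h' : η < r ω := lt_of_not_ge h
        simp only [h, if_false, h', if_true, zero_add]
        nlinarith [hY1 ω, hr_nonneg ω, hY0 ω]
    rw [integral_add hint_g hint_ind] at key
    linarith
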